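/- (Condorcet uniqueness, Top Cycle) Let P be a probabilistic tournament on n agents satisfying the margin assumption with margin δ > 0, with path-length parameter K ≥ 1, and suppose a* is a Condorcet winner, i.e. P_{a*b} > 1/2 for all b ≠ a*. Then for all sufficiently small τ > 0, a* uniquely maximizes the soft Top-Cycle score: t_τ(a*) > max_{a ≠ a*} t_τ(a). -/

import Mathlib

open Filter Topology

/-- The logistic sigmoid. -/
noncomputable def sigmoid (z : ℝ) : ℝ := 1 / (1 + Real.exp (-z))

/-- Soft majority edge matrix `D_τ`. -/
noncomputable def softEdge {n : ℕ} (P : Matrix (Fin n) (Fin n) ℝ) (τ : ℝ) :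
    Matrix (Fin n) (Fin n) ℝ := fun a b => sigmoid ((P a b - 1/2) / τ)

/-- 0/1 adjacency matrix of the hard majority tournament. -/
noncomputable def hardAdj {n : ℕ} (P : Matrix (Fin n) (Fin n) ℝ) : Matrix (Fin n) (Fin n) ℝ :=
  fun a b => if 1/2 < P a b then 1 else 0

/-- Soft reachability matrix `R_τ = Σ_{k=1}^K D_τ^k`. -/
noncomputable def softReach {n : ℕ} (P : Matrix (Fin n) (Fin n) ℝ) (τ : ℝ) (K : ℕ) :
    Matrix (Fin n) (Fin n) ℝ := ∑ k ∈ Finset.Icc 1 K, softEdge P τ ^ k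

/-- softmin over a finite family. -/
noncomputable def softmin {ι : Type*} (τ : ℝ) (s : Finset ι) (f : ι → ℝ) : ℝ :=
  -τ * Real.log (∑ i ∈ s, Real.exp (-(f i) / τ))

/-- scalar soft maximum over a finite family. -/
noncomputable def smax {ι : Type*} (τ : ℝ) (s : Finset ι) (f : ι → ℝ) : ℝ :=
  τ * Real.log (∑ i ∈ s, Real.exp (f i / τ))

/-- Soft Top-Cycle membership score `t_τ(a)`. -/
noncomputable def tcScore {n : ℕ} (P : Matrix (Fin n) (Fin n) ℝ) (τ : ℝ) (K : ℕ) (a : Fin n) : ℝ :=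
  softmin τ ({a}ᶜ : Finset (Fin n)) (fun b => softReach P τ K a b)

/-- Soft cover score `cover_τ(c, a)`. -/
noncomputable def coverScore {n : ℕ} (P : Matrix (Fin n) (Fin n) ℝ) (τ : ℝ) (c a : Fin n) : ℝ :=
  softEdge P τ c a *
    (1 - smax τ (Finset.univ : Finset (Fin n)) (fun b => softEdge P τ a b - softEdge P τ c b))

/-- Soft Uncovered-Set membership score `u_τ(a)`. -/
noncomputable def ucScore {n : ℕ} (P : Matrix (Fin n) (Fin n) ℝ) (τ : ℝ) (a : Fin n) : ℝ :=
  1 - smax τ ({a}ᶜ : Finset (Fin n)) (fun c => coverScore P τ c a)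

/-- `a ≻ b` in the hard majority tournament. -/
def beats {n : ℕ} (P : Matrix (Fin n) (Fin n) ℝ) (a b : Fin n) : Prop := 1/2 < P a b

/-- `a` reaches `b` via a directed path in the hard majority tournament. -/
def reaches {n : ℕ} (P : Matrix (Fin n) (Fin n) ℝ) : Fin n → Fin n → Prop :=
  Relation.TransGen (beats P)

/-- `c` covers `a` in the hard majority tournament. -/
def covers {n : ℕ} (P : Matrix (Fin n) (Fin n) ℝ) (c a : Fin n) : Prop :=
  beats P c a ∧ ∀ b, beats P a b → beats P c b

/-- membership in the Top Cycle of the hard majority tournament. -/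
def inTopCycle {n : ℕ} (P : Matrix (Fin n) (Fin n) ℝ) (a : Fin n) : Prop :=
  ∀ b, b ≠ a → reaches P a b

/-- membership in the Uncovered Set of the hard majority tournament. -/
def inUncovered {n : ℕ} (P : Matrix (Fin n) (Fin n) ℝ) (a : Fin n) : Prop :=
  ∀ c, c ≠ a → ¬ covers P c a

/-- `P` is a probabilistic tournament. -/
def IsProbTournament {n : ℕ} (P : Matrix (Fin n) (Fin n) ℝ) : Prop :=
  (∀ a b, 0 ≤ P a b ∧ P a b ≤ 1) ∧ (∀ a b, P a b + P b a = 1) ∧ ∀ a, P a a = 1/2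

/-- margin assumption with margin `δ`. -/
def HasMargin {n : ℕ} (P : Matrix (Fin n) (Fin n) ℝ) (δ : ℝ) : Prop :=
  ∀ a b, a ≠ b → δ ≤ |P a b - 1/2|

/-- limit matrix of `softEdge` as τ → 0⁺. -/
noncomputable def D0aux {n : ℕ} (P : Matrix (Fin n) (Fin n) ℝ) : Matrix (Fin n) (Fin n) ℝ :=
  fun a b => if a = b then 1/2 else (if 1/2 < P a b then 1 else 0)

lemma sigmoid_tendsto_one : Tendsto (fun z : ℝ => 1 / (1 + Real.exp (-z))) atTop (𝓝 1) := by
  have h : Tendsto (fun z : ℝ => 1 + Real.exp (-z)) atTop (𝓝 (1 + 0)) :=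
    tendsto_const_nhds.add Real.tendsto_exp_neg_atTop_nhds_zero
  have h2 : Tendsto (fun z : ℝ => (1:ℝ) / (1 + Real.exp (-z))) atTop (𝓝 (1/(1+0))) :=
    Tendsto.div tendsto_const_nhds h (by norm_num)
  simpa using h2

lemma sigmoid_tendsto_zero : Tendsto (fun z : ℝ => 1 / (1 + Real.exp (-z))) atBot (𝓝 0) := by
  have h : Tendsto (fun z : ℝ => 1 + Real.exp (-z)) atBot atTop := by
    apply tendsto_atTop_add_const_left
    exact Real.tendsto_exp_atTop.comp tendsto_neg_atBot_atTop
  simpa [one_div, Pi.inv_def] using h.inv_tendsto_atTop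

lemma tendsto_softEdge {n : ℕ} (P : Matrix (Fin n) (Fin n) ℝ) {δ : ℝ} (hδ : 0 < δ)
    (hP : IsProbTournament P) (hmargin : HasMargin P δ) (a b : Fin n) :
    Tendsto (fun τ => softEdge P τ a b) (𝓝[>] (0:ℝ)) (𝓝 (D0aux P a b)) := by
  unfold softEdge sigmoid D0aux
  rcases eq_or_ne a b with rfl | hab
  · simp only [hP.2.2 a, sub_self, zero_div, if_pos rfl]
    norm_num
  · rw [if_neg hab]
    have hne : P a b ≠ 1/2 := by
      intro h
      have := hmargin a b hab
      rw [h] at this; simp at this; linarith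
    rcases lt_or_gt_of_ne hne with hlt | hgt
    · rw [if_neg (by linarith)]
      have harg : Tendsto (fun τ : ℝ => (P a b - 1/2) / τ) (𝓝[>] (0:ℝ)) atBot := by
        have h1 : Tendsto (fun τ : ℝ => (1/2 - P a b) * τ⁻¹) (𝓝[>] (0:ℝ)) atTop :=
          Tendsto.const_mul_atTop (by linarith) tendsto_inv_nhdsGT_zero
        have h2 := tendsto_neg_atTop_atBot.comp h1
        convert h2 using 2 with τ
        simp [Function.comp, div_eq_mul_inv]; ring
      exact sigmoid_tendsto_zero.comp harg
    · rw [if_pos hgt]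
      have harg : Tendsto (fun τ : ℝ => (P a b - 1/2) / τ) (𝓝[>] (0:ℝ)) atTop := by
        have h1 : Tendsto (fun τ : ℝ => (P a b - 1/2) * τ⁻¹) (𝓝[>] (0:ℝ)) atTop :=
          Tendsto.const_mul_atTop (by linarith) tendsto_inv_nhdsGT_zero
        simpa [div_eq_mul_inv] using h1
      exact sigmoid_tendsto_one.comp harg

lemma tendsto_softReach {n : ℕ} (P : Matrix (Fin n) (Fin n) ℝ) {δ : ℝ} (hδ : 0 < δ)
    (hP : IsProbTournament P) (hmargin : HasMargin P δ) (K : ℕ) (a b : Fin n) :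
    Tendsto (fun τ => softReach P τ K a b) (𝓝[>] (0:ℝ))
      (𝓝 ((∑ k ∈ Finset.Icc 1 K, D0aux P ^ k) a b)) := by
  have hM : Tendsto (fun τ => softEdge P τ) (𝓝[>] (0:ℝ)) (𝓝 (D0aux P)) := by
    refine tendsto_pi_nhds.2 ?_; intro i
    refine tendsto_pi_nhds.2 ?_; intro j
    exact tendsto_softEdge P hδ hP hmargin i j
  have hS : Tendsto (fun τ => softReach P τ K) (𝓝[>] (0:ℝ))
      (𝓝 (∑ k ∈ Finset.Icc 1 K, D0aux P ^ k)) := by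
    unfold softReach
    exact tendsto_finset_sum _ (fun k _ => hM.pow k)
  have := (tendsto_pi_nhds.1 ((tendsto_pi_nhds.1 hS) a)) b
  exact this

lemma D0aux_nonneg {n : ℕ} (P : Matrix (Fin n) (Fin n) ℝ) (a b : Fin n) : 0 ≤ D0aux P a b := by
  unfold D0aux; split_ifs <;> norm_num

lemma D0aux_pow_nonneg {n : ℕ} (P : Matrix (Fin n) (Fin n) ℝ) (k : ℕ) (a b : Fin n) :
    0 ≤ (D0aux P ^ k) a b := by
  induction k generalizing a b with
  | zero => simp [Matrix.one_apply]; split_ifs <;> norm_num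
  | succ m ih =>
    rw [pow_succ, Matrix.mul_apply]
    exact Finset.sum_nonneg fun c _ => mul_nonneg (ih a c) (D0aux_nonneg P c b)

lemma D0aux_pow_astar_zero {n : ℕ} (P : Matrix (Fin n) (Fin n) ℝ)
    (hP : IsProbTournament P) (astar : Fin n)
    (hcond : ∀ b, b ≠ astar → 1/2 < P astar b) (k : ℕ) (hk : 1 ≤ k) :
    ∀ a, a ≠ astar → (D0aux P ^ k) a astar = 0 := by
  have hedge : ∀ c, c ≠ astar → D0aux P c astar = 0 := by
    intro c hc
    unfold D0aux
    rw [if_neg hc, if_neg]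
    have h1 := hP.2.1 c astar
    have h2 := hcond c hc
    linarith
  induction k with
  | zero => omega
  | succ m ih =>
    intro a ha
    rcases Nat.eq_or_lt_of_le hk with h1 | h1
    · rw [← h1, pow_one]; exact hedge a ha
    · have hm : 1 ≤ m := by omega
      rw [pow_succ, Matrix.mul_apply]
      apply Finset.sum_eq_zero
      intro c _
      rcases eq_or_ne c astar with rfl | hc
      · rw [ih hm a ha]; ring
      · rw [hedge c hc]; ring

lemma softmin_le {ι : Type*} {τ : ℝ} (hτ : 0 < τ) (s : Finset ι) (f : ι → ℝ)
    {i : ι} (hi : i ∈ s) : -τ * Real.log (∑ j ∈ s, Real.exp (-(f j) / τ)) ≤ f i := by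
  have h1 : Real.exp (-(f i) / τ) ≤ ∑ j ∈ s, Real.exp (-(f j) / τ) :=
    Finset.single_le_sum (f := fun j => Real.exp (-(f j) / τ)) (fun j _ => (Real.exp_pos _).le) hi
  have h3 : -(f i) / τ ≤ Real.log (∑ j ∈ s, Real.exp (-(f j) / τ)) := by
    rw [← Real.log_exp (-(f i) / τ)]
    exact Real.log_le_log (Real.exp_pos _) h1
  rw [div_le_iff₀ hτ] at h3
  nlinarith

lemma le_softmin {ι : Type*} {τ : ℝ} (hτ : 0 < τ) (s : Finset ι) (hs : s.Nonempty)
    (f : ι → ℝ) (c : ℝ) (h : ∀ i ∈ s, c ≤ f i) :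
    c - τ * Real.log s.card ≤ -τ * Real.log (∑ j ∈ s, Real.exp (-(f j) / τ)) := by
  have hpos : 0 < ∑ j ∈ s, Real.exp (-(f j) / τ) :=
    Finset.sum_pos (fun j _ => Real.exp_pos _) hs
  have h1 : ∑ j ∈ s, Real.exp (-(f j) / τ) ≤ (s.card : ℝ) * Real.exp (-c / τ) := by
    calc ∑ j ∈ s, Real.exp (-(f j) / τ) ≤ ∑ _j ∈ s, Real.exp (-c / τ) := by
          apply Finset.sum_le_sum
          intro j hj
          apply Real.exp_le_exp.2
          have hc := h j hj
          exact div_le_div_of_nonneg_right (by linarith) hτ.le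
      _ = (s.card : ℝ) * Real.exp (-c / τ) := by
          rw [Finset.sum_const, nsmul_eq_mul]
  have hcard : (0:ℝ) < s.card := by exact_mod_cast Finset.card_pos.2 hs
  have h2 : Real.log (∑ j ∈ s, Real.exp (-(f j) / τ)) ≤ Real.log s.card + (-c / τ) := by
    have := Real.log_le_log hpos h1
    rwa [Real.log_mul (ne_of_gt hcard) (Real.exp_ne_zero _), Real.log_exp] at this
  have h4 : τ * Real.log (∑ j ∈ s, Real.exp (-(f j) / τ)) ≤
      τ * (Real.log s.card + (-c / τ)) := mul_le_mul_of_nonneg_left h2 hτ.le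
  have h5 : τ * (-c / τ) = -c := by field_simp
  nlinarith

/-- a Condorcet winner eventually uniquely maximizes the soft Top-Cycle score. -/
theorem condorcet_unique_top_cycle {n : ℕ} (hn : 2 ≤ n) (P : Matrix (Fin n) (Fin n) ℝ)
    (δ : ℝ) (hδ : 0 < δ) (hP : IsProbTournament P) (hmargin : HasMargin P δ)
    (K : ℕ) (hK : 1 ≤ K) (astar : Fin n)
    (hcond : ∀ b, b ≠ astar → 1/2 < P astar b) :
    ∀ᶠ τ : ℝ in 𝓝[>] (0:ℝ), ∀ a, a ≠ astar → tcScore P τ K a < tcScore P τ K astar := by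
  classical
  have hcard : 1 < Fintype.card (Fin n) := by simp; omega
  obtain ⟨b0, hb0⟩ := Fintype.exists_ne_of_one_lt_card hcard astar
  have hsne : ({astar}ᶜ : Finset (Fin n)).Nonempty := ⟨b0, by simp [hb0]⟩
  set R0 : Matrix (Fin n) (Fin n) ℝ := ∑ k ∈ Finset.Icc 1 K, D0aux P ^ k with hR0
  have hR0big : ∀ b, b ≠ astar → (1:ℝ) ≤ R0 astar b := by
    intro b hb
    have h1 : (D0aux P ^ 1) astar b = 1 := by
      rw [pow_one]
      unfold D0aux
      rw [if_neg (Ne.symm hb), if_pos (hcond b hb)]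
    calc (1:ℝ) = (D0aux P ^ 1) astar b := h1.symm
      _ ≤ ∑ k ∈ Finset.Icc 1 K, (D0aux P ^ k) astar b :=
          Finset.single_le_sum (fun k _ => D0aux_pow_nonneg P k astar b)
            (Finset.mem_Icc.2 ⟨le_refl 1, hK⟩)
      _ = R0 astar b := by rw [hR0]; simp [Matrix.sum_apply]
  have hR0zero : ∀ a, a ≠ astar → R0 a astar = 0 := by
    intro a ha
    rw [hR0]
    simp only [Matrix.sum_apply]
    apply Finset.sum_eq_zero
    intro k hk
    exact D0aux_pow_astar_zero P hP astar hcond k (Finset.mem_Icc.1 hk).1 a ha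
  have E1 : ∀ᶠ τ : ℝ in 𝓝[>] (0:ℝ), τ ∈ Set.Ioi (0:ℝ) := eventually_mem_nhdsWithin
  have E2 : ∀ᶠ τ : ℝ in 𝓝[>] (0:ℝ),
      τ * Real.log (({astar}ᶜ : Finset (Fin n)).card) < 1/8 := by
    have hid : Tendsto (fun τ : ℝ => τ) (𝓝[>] (0:ℝ)) (𝓝 0) :=
      tendsto_id.mono_left nhdsWithin_le_nhds
    have h : Tendsto (fun τ : ℝ => τ * Real.log (({astar}ᶜ : Finset (Fin n)).card))
        (𝓝[>] (0:ℝ)) (𝓝 0) := by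
      simpa using hid.mul_const (Real.log (({astar}ᶜ : Finset (Fin n)).card))
    exact h.eventually_lt_const (by norm_num)
  have E3 : ∀ᶠ τ : ℝ in 𝓝[>] (0:ℝ), ∀ b ∈ ({astar}ᶜ : Finset (Fin n)),
      3/4 < softReach P τ K astar b := by
    rw [eventually_all_finset]
    intro b hb
    have hb' : b ≠ astar := by simpa using hb
    exact Tendsto.eventually_const_lt
      (by linarith [hR0big b hb'] : (3/4:ℝ) < R0 astar b)
      (tendsto_softReach P hδ hP hmargin K astar b)
  have E4 : ∀ᶠ τ : ℝ in 𝓝[>] (0:ℝ), ∀ a ∈ ({astar}ᶜ : Finset (Fin n)),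
      softReach P τ K a astar < 1/8 := by
    rw [eventually_all_finset]
    intro a ha
    have ha' : a ≠ astar := by simpa using ha
    have := tendsto_softReach P hδ hP hmargin K a astar
    rw [← hR0, hR0zero a ha'] at this
    exact this.eventually_lt_const (by norm_num)
  filter_upwards [E1, E2, E3, E4] with τ hτ h2 h3 h4
  intro a ha
  have hτ' : 0 < τ := hτ
  have hmemA : astar ∈ ({a}ᶜ : Finset (Fin n)) := by simp [Ne.symm ha]
  have hub : tcScore P τ K a ≤ softReach P τ K a astar := by
    unfold tcScore softmin
    exact softmin_le hτ' _ _ hmemA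
  have hlb : 3/4 - τ * Real.log (({astar}ᶜ : Finset (Fin n)).card) ≤ tcScore P τ K astar := by
    unfold tcScore softmin
    exact le_softmin hτ' _ hsne _ _ (fun b hb => (h3 b hb).le)
  have h4a := h4 a (by simp [ha])
  linarith
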